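/- Let G be a connected graph on n vertices. The Smith normal form of the signless distance Laplacian matrix D^Q(G) has at most one invariant factor equal to 1 if and only if G is a complete graph and n ≠ 3. -/

import Mathlib

open Matrix MvPolynomial

variable {V : Type*}

/-- The distance matrix of a graph: the `(u,v)` entry is the graph distance `d_G(u,v)`. -/
noncomputable def distMatrix [Fintype V] (G : SimpleGraph V) : Matrix V V ℤ :=
  fun u v => (G.dist u v : ℤ)

/-- The transmission of a vertex: the sum of the distances to all vertices. -/
noncomputable def transmission [Fintype V] (G : SimpleGraph V) (u : V) : ℤ :=
  ∑ v, (G.dist u v : ℤ)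

/-- The distance Laplacian matrix `D^L(G) = diag(tr) - D(G)`. -/
noncomputable def distLaplacian [Fintype V] [DecidableEq V] (G : SimpleGraph V) : Matrix V V ℤ :=
  Matrix.diagonal (transmission G) - distMatrix G

/-- The signless distance Laplacian matrix `D^Q(G) = diag(tr) + D(G)`. -/
noncomputable def signlessDistLaplacian [Fintype V] [DecidableEq V] (G : SimpleGraph V) : Matrix V V ℤ :=
  Matrix.diagonal (transmission G) + distMatrix G

/-- Two integer matrices are equivalent over `ℤ` if `M = U * N * W` with `U`, `W`
invertible over `ℤ` (unimodular). -/
def MatEquivZ [Fintype V] [DecidableEq V] (M N : Matrix V V ℤ) : Prop :=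
  ∃ U W : Matrix V V ℤ, IsUnit U.det ∧ IsUnit W.det ∧ M = U * N * W

/-- `f` lists the diagonal entries of the Smith normal form of `M`:
the diagonal matrix `diagonal f` is equivalent to `M` over `ℤ`, consecutive entries
divide each other, and the entries are nonnegative (normalization over `ℤ`). -/
def IsSNF {N : ℕ} (M : Matrix (Fin N) (Fin N) ℤ) (f : Fin N → ℤ) : Prop :=
  MatEquivZ M (Matrix.diagonal f) ∧ (∀ i j : Fin N, i ≤ j → f i ∣ f j) ∧ ∀ i, 0 ≤ f i

/-- The ideal generated by the determinants of all `k × k` submatrices of `M`. -/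
def minorsIdeal {R : Type*} [CommRing R] [Fintype V] (M : Matrix V V R) (k : ℕ) : Ideal R :=
  Ideal.span (Set.range fun p : (Fin k → V) × (Fin k → V) => (M.submatrix p.1 p.2).det)

/-- The generalized distance matrix `D(G, X_G) = diag(X_G) + D(G)` over `ℤ[X_G]`. -/
noncomputable def genDistMatrix [Fintype V] [DecidableEq V] (G : SimpleGraph V) :
    Matrix V V (MvPolynomial V ℤ) :=
  Matrix.diagonal (fun u => MvPolynomial.X u) +
    (distMatrix G).map (fun a => (a : MvPolynomial V ℤ))

/-- The `k`-th distance ideal `I_k(G, X_G)`: the ideal of `ℤ[X_G]` generated by the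
determinants of all `k × k` submatrices of the generalized distance matrix. -/
noncomputable def distIdeal [Fintype V] [DecidableEq V] (G : SimpleGraph V) (k : ℕ) :
    Ideal (MvPolynomial V ℤ) :=
  minorsIdeal (genDistMatrix G) k


section AuxLemmas

lemma sdl_diag {n : ℕ} (G : SimpleGraph (Fin n)) (a : Fin n) :
    signlessDistLaplacian G a a = transmission G a := by
  simp [signlessDistLaplacian, distMatrix, Matrix.add_apply, SimpleGraph.dist_self]

lemma sdl_off {n : ℕ} (G : SimpleGraph (Fin n)) {a b : Fin n} (h : a ≠ b) :
    signlessDistLaplacian G a b = (G.dist a b : ℤ) := by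
  simp [signlessDistLaplacian, distMatrix, Matrix.add_apply, Matrix.diagonal_apply_ne _ h]

lemma sdl_row_sum {n : ℕ} (G : SimpleGraph (Fin n)) (a : Fin n) :
    ∑ b, signlessDistLaplacian G a b = 2 * transmission G a := by
  unfold signlessDistLaplacian
  simp only [Matrix.add_apply, Finset.sum_add_distrib, Matrix.diagonal_apply, distMatrix]
  rw [Finset.sum_ite_eq Finset.univ a (fun _ => transmission G a)]
  simp [transmission]
  ring

lemma exists_prime_rank_one {N : ℕ} (M : Matrix (Fin N) (Fin N) ℤ) (f : Fin N → ℤ)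
    (hN : 1 < N) (hf : IsSNF M f) (h1 : f ⟨1, hN⟩ ≠ 1) :
    ∃ p : ℕ, p.Prime ∧ ∃ x y : Fin N → ZMod p,
      ∀ a b, ((M a b : ZMod p)) = x a * y b := by
  obtain ⟨U, W, hU, hW, hM⟩ := hf.1
  obtain ⟨hdvd, hnn⟩ := hf.2
  set i1 : Fin N := ⟨1, hN⟩ with hi1
  set i0 : Fin N := ⟨0, by omega⟩ with hi0
  obtain ⟨p, hp, hpdvd⟩ := Nat.exists_prime_and_dvd (n := (f i1).toNat) (by
    intro h
    apply h1
    have h2 := hnn i1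
    omega)
  refine ⟨p, hp, ?_⟩
  have hpf : (p : ℤ) ∣ f i1 := by
    have h3 := Int.toNat_of_nonneg (hnn i1)
    rw [← h3]
    exact_mod_cast Int.natCast_dvd_natCast.mpr hpdvd
  set φ := Int.castRingHom (ZMod p) with hφ
  refine ⟨fun a => U.map φ a i0 * ((f i0 : ZMod p)), fun b => W.map φ i0 b, ?_⟩
  intro a b
  have hM' : M.map φ a b = ∑ j, U.map φ a j * ((f j : ZMod p)) * W.map φ j b := by
    rw [hM]
    rw [Matrix.map_mul, Matrix.map_mul, Matrix.diagonal_map (map_zero φ)]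
    rw [Matrix.mul_apply]
    refine Finset.sum_congr rfl fun j _ => ?_
    rw [Matrix.mul_diagonal]
    rfl
  have hMab : M.map φ a b = ((M a b : ZMod p)) := rfl
  have hsum : ∑ j, U.map φ a j * ((f j : ZMod p)) * W.map φ j b
      = U.map φ a i0 * ((f i0 : ZMod p)) * W.map φ i0 b := by
    refine Finset.sum_eq_single i0 (fun j _ hj => ?_) (fun h => absurd (Finset.mem_univ i0) h)
    have hfj : ((f j : ZMod p)) = 0 := by
      rw [ZMod.intCast_zmod_eq_zero_iff_dvd]
      refine dvd_trans hpf (hdvd i1 j ?_)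
      have : j.val ≠ 0 := fun h => hj (Fin.ext h)
      simp only [Fin.le_def, hi1]
      omega
    simp [hfj]
  rw [← hMab, hM', hsum]

lemma card_le_one_iff_snf {N : ℕ} (f : Fin N → ℤ) (hN : 1 < N)
    (hdvd : ∀ i j : Fin N, i ≤ j → f i ∣ f j) (hnn : ∀ i, 0 ≤ f i) :
    Nat.card {i : Fin N // f i = 1} ≤ 1 ↔ f ⟨1, hN⟩ ≠ 1 := by
  set i0 : Fin N := ⟨0, by omega⟩ with hi0
  set i1 : Fin N := ⟨1, hN⟩ with hi1
  constructor
  · intro h h1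
    have h0 : f i0 = 1 := by
      have hd := hdvd i0 i1 (by rw [hi0, hi1, Fin.mk_le_mk]; omega)
      rw [h1] at hd
      have := Int.isUnit_iff.mp (isUnit_of_dvd_one hd)
      have := hnn i0
      omega
    have : Nontrivial {i : Fin N // f i = 1} :=
      ⟨⟨i0, h0⟩, ⟨i1, h1⟩, by simp [hi0, hi1, Fin.ext_iff]⟩
    have := Nat.card_eq_fintype_card (α := {i : Fin N // f i = 1}) ▸
      Fintype.one_lt_card_iff_nontrivial.mpr this
    omega
  · intro h1
    rw [Nat.card_eq_fintype_card]; rw [Fintype.card_le_one_iff_subsingleton]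
    refine ⟨fun ⟨i, hi⟩ ⟨j, hj⟩ => ?_⟩
    have key : ∀ k, f k = 1 → k = i0 := by
      intro k hk
      by_contra hne
      apply h1
      have hd := hdvd i1 k (by
        have : k.val ≠ 0 := fun h => hne (Fin.ext h)
        simp only [Fin.le_def, hi1]; omega)
      rw [hk] at hd
      have := Int.isUnit_iff.mp (isUnit_of_dvd_one hd)
      have := hnn i1
      omega
    simp [key i hi, key j hj]

lemma exists_dist_two {n : ℕ} (G : SimpleGraph (Fin n)) (hG : G.Connected) (hne : G ≠ ⊤) :
    ∃ u w v : Fin n, G.Adj u w ∧ G.Adj w v ∧ G.dist u v = 2 ∧ u ≠ v := by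
  have hpair : ∃ u v : Fin n, u ≠ v ∧ ¬ G.Adj u v := by
    by_contra hc
    push_neg at hc
    apply hne
    ext a b
    simp only [SimpleGraph.top_adj]
    exact ⟨fun h => h.ne, fun h => hc a b h⟩
  obtain ⟨u, v, huv, hnadj⟩ := hpair
  have hd0 : G.dist u v ≠ 0 :=
    SimpleGraph.dist_ne_zero_iff_ne_and_reachable.mpr ⟨huv, hG.preconnected u v⟩
  have hd1 : G.dist u v ≠ 1 := fun h => hnadj (SimpleGraph.dist_eq_one_iff_adj.mp h)
  obtain ⟨p, hplen⟩ := SimpleGraph.exists_walk_of_dist_ne_zero hd0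
  cases p with
  | nil => simp at hplen; omega
  | cons h q =>
    rename_i w
    cases q with
    | nil => simp at hplen; omega
    | cons h2 r =>
      rename_i c
      have hrlen : r.length + 2 = G.dist u v := by simpa using hplen
      have hdcv : G.dist c v ≤ G.dist u v - 2 := by
        have := SimpleGraph.dist_le r
        omega
      have hnadj2 : ¬ G.Adj u c := by
        intro hadj
        have ht := hG.dist_triangle (u := u) (v := c) (w := v)
        have h1 : G.dist u c = 1 := SimpleGraph.dist_eq_one_iff_adj.mpr hadj
        omega
      have hne2 : u ≠ c := by
        intro he
        subst he
        omega
      refine ⟨u, w, c, h, h2, ?_, hne2⟩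
      have hle : G.dist u c ≤ 2 := by
        have ht := hG.dist_triangle (u := u) (v := w) (w := c)
        have h1 : G.dist u w = 1 := SimpleGraph.dist_eq_one_iff_adj.mpr h
        have h2' : G.dist w c = 1 := SimpleGraph.dist_eq_one_iff_adj.mpr h2
        omega
      have hne0 : G.dist u c ≠ 0 :=
        SimpleGraph.dist_ne_zero_iff_ne_and_reachable.mpr ⟨hne2, hG.preconnected u c⟩
      have hne1 : G.dist u c ≠ 1 := fun hh => hnadj2 (SimpleGraph.dist_eq_one_iff_adj.mp hh)
      omega

lemma noncomplete_contra {n : ℕ} (G : SimpleGraph (Fin n)) (p : ℕ) (hp : p.Prime)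
    (x y : Fin n → ZMod p)
    (hxy : ∀ a b, ((signlessDistLaplacian G a b : ZMod p)) = x a * y b)
    {u w v : Fin n} (huw : G.Adj u w) (hwv : G.Adj w v) (hd : G.dist u v = 2)
    (huv : u ≠ v) : False := by
  haveI := Fact.mk hp
  have cast_off : ∀ {a b : Fin n}, a ≠ b → x a * y b = ((G.dist a b : ℤ) : ZMod p) := by
    intro a b hab
    rw [← hxy a b, sdl_off G hab]
  have cast_diag : ∀ a : Fin n, x a * y a = ((transmission G a : ℤ) : ZMod p) := by
    intro a
    rw [← hxy a a, sdl_diag G a]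
  have d_uw : G.dist u w = 1 := SimpleGraph.dist_eq_one_iff_adj.mpr huw
  have d_wu : G.dist w u = 1 := SimpleGraph.dist_eq_one_iff_adj.mpr huw.symm
  have d_wv : G.dist w v = 1 := SimpleGraph.dist_eq_one_iff_adj.mpr hwv
  have d_vw : G.dist v w = 1 := SimpleGraph.dist_eq_one_iff_adj.mpr hwv.symm
  have d_vu : G.dist v u = 2 := by
    rw [SimpleGraph.dist_comm]; exact hd
  have h_uw : x u * y w = 1 := by rw [cast_off huw.ne, d_uw]; norm_num
  have h_wu : x w * y u = 1 := by rw [cast_off huw.ne', d_wu]; norm_num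
  have h_wv : x w * y v = 1 := by rw [cast_off hwv.ne, d_wv]; norm_num
  have h_vw : x v * y w = 1 := by rw [cast_off hwv.ne', d_vw]; norm_num
  have h_uv : x u * y v = 2 := by rw [cast_off huv, hd]; norm_num
  have h_vu : x v * y u = 2 := by rw [cast_off (Ne.symm huv), d_vu]; norm_num
  set S := ∑ b, y b with hS
  have hrow : ∀ a, x a * S = 2 * (x a * y a) := by
    intro a
    have h0 := congrArg (fun z : ℤ => ((z : ZMod p))) (sdl_row_sum G a)
    push_cast at h0
    calc x a * S = ∑ b, x a * y b := by rw [hS, Finset.mul_sum]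
      _ = ∑ b, ((signlessDistLaplacian G a b : ℤ) : ZMod p) :=
          Finset.sum_congr rfl fun b _ => (hxy a b).symm
      _ = 2 * ((transmission G a : ℤ) : ZMod p) := h0
      _ = 2 * (x a * y a) := by rw [cast_diag a]
  have hxu : x u ≠ 0 := left_ne_zero_of_mul_eq_one h_uw
  have hxw : x w ≠ 0 := left_ne_zero_of_mul_eq_one h_wu
  have hxv : x v ≠ 0 := left_ne_zero_of_mul_eq_one h_vw
  have hSu : S = 2 * y u := mul_left_cancel₀ hxu (by rw [hrow u]; ring)
  have hSw : S = 2 * y w := mul_left_cancel₀ hxw (by rw [hrow w]; ring)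
  have hyu : y u = 2 * y w := by
    refine mul_left_cancel₀ hxv ?_
    rw [h_vu, show x v * (2 * y w) = 2 * (x v * y w) by ring, h_vw, mul_one]
  have e : (2 : ZMod p) * y u = 2 * y w := hSu.symm.trans hSw
  have hy0 : y u = 0 := by linear_combination e - hyu
  rw [hy0, mul_zero] at h_wu
  exact one_ne_zero h_wu.symm

lemma top_dist {n : ℕ} {a b : Fin n} (h : a ≠ b) :
    (⊤ : SimpleGraph (Fin n)).dist a b = 1 :=
  SimpleGraph.dist_eq_one_iff_adj.mpr (by simpa using h)

lemma top_transmission {n : ℕ} (a : Fin n) :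
    transmission (⊤ : SimpleGraph (Fin n)) a = (n : ℤ) - 1 := by
  unfold transmission
  have key : ∀ v : Fin n, (((⊤ : SimpleGraph (Fin n)).dist a v : ℤ)) =
      1 - (if a = v then 1 else 0) := by
    intro v
    by_cases h : a = v
    · subst h; simp [SimpleGraph.dist_self]
    · rw [top_dist h]; simp [h]
  rw [Finset.sum_congr rfl fun v _ => key v, Finset.sum_sub_distrib]
  simp [Finset.sum_ite_eq]

lemma k3_contra (p : ℕ) (hp : p.Prime) (x y : Fin 3 → ZMod p)
    (hxy : ∀ a b, ((signlessDistLaplacian (⊤ : SimpleGraph (Fin 3)) a b : ZMod p))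
      = x a * y b) : False := by
  haveI := Fact.mk hp
  have h01 : x 0 * y 1 = 1 := by
    rw [← hxy, sdl_off _ (by decide), top_dist (by decide)]; norm_num
  have h12 : x 1 * y 2 = 1 := by
    rw [← hxy, sdl_off _ (by decide), top_dist (by decide)]; norm_num
  have h02 : x 0 * y 2 = 1 := by
    rw [← hxy, sdl_off _ (by decide), top_dist (by decide)]; norm_num
  have h11 : x 1 * y 1 = 2 := by
    rw [← hxy, sdl_diag, top_transmission]
    norm_num
  have hkey : (1 : ZMod p) = 2 := by
    calc (1 : ZMod p) = (x 0 * y 1) * (x 1 * y 2) := by rw [h01, h12, one_mul]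
      _ = (x 0 * y 2) * (x 1 * y 1) := by ring
      _ = 2 := by rw [h02, h11, one_mul]
  exact one_ne_zero (by linear_combination -hkey : (1 : ZMod p) = 0)

lemma complete_contra {n : ℕ} (hn : 1 < n) (hn3 : n ≠ 3) (f : Fin n → ℤ)
    (hf : IsSNF (signlessDistLaplacian (⊤ : SimpleGraph (Fin n))) f)
    (h0 : f ⟨0, by omega⟩ = 1) (h1 : f ⟨1, hn⟩ = 1) : False := by
  obtain ⟨U, W, hU, hW, hM⟩ := hf.1
  obtain ⟨p, hp, hpdvd⟩ := Nat.exists_prime_and_dvd (n := n - 2) (by omega)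
  haveI := Fact.mk hp
  have hpz : (p : ℤ) ∣ (n : ℤ) - 2 := by
    have : ((n - 2 : ℕ) : ℤ) = (n : ℤ) - 2 := by push_cast [Nat.cast_sub (by omega : 2 ≤ n)]; ring
    rw [← this]
    exact_mod_cast Int.natCast_dvd_natCast.mpr hpdvd
  set φ := Int.castRingHom (ZMod p) with hφ
  set U' := U.map φ with hU'
  set W' := W.map φ with hW'
  set D' := (Matrix.diagonal f).map φ with hD'
  set M' := (signlessDistLaplacian (⊤ : SimpleGraph (Fin n))).map φ with hM'
  have hMeq : M' = U' * D' * W' := by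
    rw [hM', hM, Matrix.map_mul, Matrix.map_mul]
  have hUdet : IsUnit U'.det := by
    rw [hU', ← RingHom.mapMatrix_apply, ← RingHom.map_det]
    exact hU.map φ
  have hWdet : IsUnit W'.det := by
    rw [hW', ← RingHom.mapMatrix_apply, ← RingHom.map_det]
    exact hW.map φ
  have key : D' = U'⁻¹ * M' * W'⁻¹ := by
    rw [hMeq, ← Matrix.mul_assoc, ← Matrix.mul_assoc,
      Matrix.nonsing_inv_mul _ hUdet, Matrix.one_mul,
      Matrix.mul_assoc, Matrix.mul_nonsing_inv _ hWdet, Matrix.mul_one]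
  have hone : ∀ a b, M' a b = 1 := by
    intro a b
    rw [hM']
    by_cases h : a = b
    · subst h
      show φ (signlessDistLaplacian _ a a) = 1
      rw [sdl_diag, top_transmission]
      show (((n : ℤ) - 1 : ℤ) : ZMod p) = 1
      have : (((n : ℤ) - 2 : ℤ) : ZMod p) = 0 := by
        rw [ZMod.intCast_zmod_eq_zero_iff_dvd]; exact hpz
      push_cast at this ⊢
      linear_combination this
    · show φ (signlessDistLaplacian _ a b) = 1
      rw [sdl_off _ h, top_dist h]
      simp
  have hent : ∀ a b, D' a b = (∑ i, U'⁻¹ a i) * (∑ j, W'⁻¹ j b) := by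
    intro a b
    rw [key, Matrix.mul_apply]
    have step : ∀ j, (U'⁻¹ * M') a j = ∑ i, U'⁻¹ a i := by
      intro j
      rw [Matrix.mul_apply]
      exact Finset.sum_congr rfl fun i _ => by rw [hone i j, mul_one]
    rw [Finset.sum_congr rfl fun j _ => by rw [step j]]
    rw [← Finset.mul_sum]
  set i0 : Fin n := ⟨0, by omega⟩ with hi0
  set i1 : Fin n := ⟨1, hn⟩ with hi1
  have hne01 : i0 ≠ i1 := by simp [hi0, hi1, Fin.ext_iff]
  have e00 : D' i0 i0 = 1 := by
    rw [hD']
    show φ (Matrix.diagonal f i0 i0) = 1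
    rw [Matrix.diagonal_apply_eq, h0]; simp
  have e11 : D' i1 i1 = 1 := by
    rw [hD']
    show φ (Matrix.diagonal f i1 i1) = 1
    rw [Matrix.diagonal_apply_eq, h1]; simp
  have e01 : D' i0 i1 = 0 := by
    rw [hD']
    show φ (Matrix.diagonal f i0 i1) = 0
    rw [Matrix.diagonal_apply_ne _ hne01]; simp
  have e10 : D' i1 i0 = 0 := by
    rw [hD']
    show φ (Matrix.diagonal f i1 i0) = 0
    rw [Matrix.diagonal_apply_ne _ hne01.symm]; simp
  have main : D' i0 i0 * D' i1 i1 = D' i0 i1 * D' i1 i0 := by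
    rw [hent, hent, hent, hent]; ring
  rw [e00, e11, e01, e10, mul_zero, mul_one] at main
  exact one_ne_zero main

end AuxLemmas

/-- For a connected graph `G` on `n` vertices, the Smith normal form of its
signless distance Laplacian matrix has at most one invariant factor equal to `1` if and
only if `G` is a complete graph and `n ≠ 3`. -/
theorem signlessDistLaplacian_at_most_one_invariantFactor_one_iff (n : ℕ)
    (G : SimpleGraph (Fin n)) (hG : G.Connected) (f : Fin n → ℤ)
    (hf : IsSNF (signlessDistLaplacian G) f) :
    Nat.card {i : Fin n // f i = 1} ≤ 1 ↔ (G = ⊤ ∧ n ≠ 3) := by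
  classical
  rcases Nat.lt_or_ge n 2 with hn | hn
  · constructor
    · intro _
      refine ⟨?_, by omega⟩
      ext a b
      have hab : a = b := by
        have := a.isLt
        have := b.isLt
        exact Fin.ext (by omega)
      subst hab
      exact ⟨fun h => (G.irrefl h).elim, fun h => (h.ne rfl).elim⟩
    · intro _
      calc Nat.card {i : Fin n // f i = 1} = Fintype.card {i : Fin n // f i = 1} :=
            Nat.card_eq_fintype_card
        _ ≤ Fintype.card (Fin n) := Fintype.card_subtype_le _
        _ ≤ 1 := by rw [Fintype.card_fin]; omega
  · rw [card_le_one_iff_snf f hn hf.2.1 hf.2.2]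
    constructor
    · intro h1
      by_contra hcon
      obtain ⟨p, hp, x, y, hxy⟩ := exists_prime_rank_one _ f hn hf h1
      by_cases hGtop : G = ⊤
      · have hn3 : n = 3 := by tauto
        subst hn3
        subst hGtop
        exact k3_contra p hp x y hxy
      · obtain ⟨u, w, v, huw, hwv, hd, huv⟩ := exists_dist_two G hG hGtop
        exact noncomplete_contra G p hp x y hxy huw hwv hd huv
    · rintro ⟨hGtop, hn3⟩ h1
      subst hGtop
      have h0 : f ⟨0, by omega⟩ = 1 := by
        have hd := hf.2.1 ⟨0, by omega⟩ ⟨1, hn⟩ (by simp [Fin.le_def])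
        rw [h1] at hd
        have := Int.isUnit_iff.mp (isUnit_of_dvd_one hd)
        have := hf.2.2 ⟨0, by omega⟩
        omega
      exact complete_contra hn hn3 f hf h0 h1
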